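/- Let M ⊆ ℂ be closed under the map (p,q) ↦ intersection of the line through p at angle α with the line through q at angle β, for all angles α, β in U = {0, π/n, 2π/n, ..., (n-1)π/n}, and suppose 0, 1 ∈ M. If cos(π/n) + i·sin(π/n) ∈ M then 2cos(π/n) ∈ M ∩ ℝ, and conversely if 2cos(π/n) ∈ M then cos(π/n) + i·sin(π/n) ∈ M. -/

import Mathlib

open Real Complex

theorem cos_point_mem_iff_two_cos_mem (n : ℕ) (hn : 3 ≤ n) (M : Set ℂ)
    (h0 : (0 : ℂ) ∈ M) (h1 : (1 : ℂ) ∈ M)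
    (hclosed : ∀ j k : ℕ, j < n → k < n →
      Real.sin ((k : ℝ) * π / n - (j : ℝ) * π / n) ≠ 0 →
      ∀ p ∈ M, ∀ q ∈ M, ∀ z : ℂ,
        (∃ r : ℝ, z = p + (r : ℂ) *
          (Real.cos ((j : ℝ) * π / n) + Real.sin ((j : ℝ) * π / n) * Complex.I)) →
        (∃ s : ℝ, z = q + (s : ℂ) *
          (Real.cos ((k : ℝ) * π / n) + Real.sin ((k : ℝ) * π / n) * Complex.I)) →
        z ∈ M) :
    ((Real.cos (π / n) + Real.sin (π / n) * Complex.I : ℂ) ∈ M →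
      ((2 * Real.cos (π / n) : ℝ) : ℂ) ∈ M) ∧
    (((2 * Real.cos (π / n) : ℝ) : ℂ) ∈ M →
      (Real.cos (π / n) + Real.sin (π / n) * Complex.I : ℂ) ∈ M) := by
  have hn0 : (0:ℝ) < n := by positivity
  have hnn : (n:ℝ) ≠ 0 := ne_of_gt hn0
  have hcast : ((n - 1 : ℕ) : ℝ) = (n : ℝ) - 1 := by
    have : (1:ℕ) ≤ n := by omega
    push_cast [this]; ring
  have harg : ((n - 1 : ℕ) : ℝ) * π / n = π - π / n := by
    rw [hcast]; field_simp
  have hcosk : Real.cos (((n - 1 : ℕ) : ℝ) * π / n) = - Real.cos (π / n) := by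
    rw [harg, Real.cos_pi_sub]
  have hsink : Real.sin (((n - 1 : ℕ) : ℝ) * π / n) = Real.sin (π / n) := by
    rw [harg, Real.sin_pi_sub]
  have hθpos : 0 < π / n := by positivity
  have h3 : (3:ℝ) ≤ n := by exact_mod_cast hn
  have hθlt : π / n < π := by
    rw [div_lt_iff₀ hn0]
    nlinarith [Real.pi_pos]
  have hsinθ : Real.sin (π / n) > 0 := Real.sin_pos_of_pos_of_lt_pi hθpos hθlt
  have h2lt : 2 * (π / n) < π := by
    rw [show 2 * (π / (n:ℝ)) = (2 * π) / n by ring, div_lt_iff₀ hn0]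
    nlinarith [Real.pi_pos]
  have hsin2θ : Real.sin (2 * (π / n)) > 0 :=
    Real.sin_pos_of_pos_of_lt_pi (by positivity) h2lt
  have hkn : n - 1 < n := by omega
  constructor
  · intro hmem
    refine hclosed 0 (n - 1) (by omega) hkn ?_ 0 h0 _ hmem _ ?_ ?_
    · rw [show ((0:ℕ):ℝ) * π / n = 0 by push_cast; ring, harg]
      simpa using ne_of_gt hsinθ
    · refine ⟨2 * Real.cos (π / n), ?_⟩
      rw [show ((0:ℕ):ℝ) * π / n = 0 by push_cast; ring]
      simp
    · refine ⟨-1, ?_⟩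
      rw [hcosk, hsink]
      push_cast
      ring
  · intro hmem
    refine hclosed 1 (n - 1) (by omega) hkn ?_ 0 h0 _ hmem _ ?_ ?_
    · rw [show ((1:ℕ):ℝ) * π / n = π / n by push_cast; ring, harg,
        show π - π / n - π / n = π - 2 * (π / n) by ring, Real.sin_pi_sub]
      exact ne_of_gt hsin2θ
    · refine ⟨1, ?_⟩
      rw [show ((1:ℕ):ℝ) * π / n = π / n by push_cast; ring]
      push_cast; ring
    · refine ⟨1, ?_⟩
      rw [hcosk, hsink]
      push_cast
      ring
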